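/- Let M₀ = [[1/10, 0], [0, 1/5]] and N₀ = [[3/10, 1/√10], [1/√10, 7/10]] as 2×2 real matrices, and let Φ_M, Φ_N be the measurement channels of the two-outcome POVMs {M₀, 1₂ − M₀} and {N₀, 1₂ − N₀}. Then M₀·N₀ ≠ N₀·M₀ (the POVMs do not commute), det(M₀ − N₀) = 0, and (Φ_M, Φ_N) is a Maximal Entanglement Worst Case pair: ‖Φ_M − Φ_N‖_⋄ = 2·‖Φ_M − Φ_N‖_ME. -/

import Mathlib

open Matrix Kronecker ComplexOrder

noncomputable section

/-- The matrix absolute value `|A| = √(AᴴA)`. -/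
noncomputable def matAbs {n : Type*} [Fintype n] [DecidableEq n] (A : Matrix n n ℂ) :
    Matrix n n ℂ :=
  (Matrix.posSemidef_conjTranspose_mul_self A).1.eigenvectorUnitary.1 *
    Matrix.diagonal ((↑) ∘ Real.sqrt ∘ (Matrix.posSemidef_conjTranspose_mul_self A).1.eigenvalues) *
    (star (Matrix.posSemidef_conjTranspose_mul_self A).1.eigenvectorUnitary : Matrix n n ℂ)

/-- The trace norm `‖A‖₁ = Tr √(AᴴA)`. -/
noncomputable def traceNorm {n : Type*} [Fintype n] [DecidableEq n] (A : Matrix n n ℂ) : ℝ :=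
  ((matAbs A).trace).re

/-- The positive semidefinite square root of a PSD matrix (zero otherwise). -/
noncomputable def matSqrt {n : Type*} [Fintype n] [DecidableEq n] (σ : Matrix n n ℂ) :
    Matrix n n ℂ :=
  open scoped Classical in
  if h : σ.PosSemidef then
    h.1.eigenvectorUnitary.1 * Matrix.diagonal ((↑) ∘ Real.sqrt ∘ h.1.eigenvalues) *
      (star h.1.eigenvectorUnitary : Matrix n n ℂ) else 0

/-- A density matrix: positive semidefinite with unit trace. -/
def IsDensity {n : Type*} [Fintype n] [DecidableEq n] (σ : Matrix n n ℂ) : Prop :=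
  σ.PosSemidef ∧ σ.trace = 1

/-- The Choi operator of a linear map between matrix algebras. -/
noncomputable def choi {d m : ℕ}
    (S : Matrix (Fin d) (Fin d) ℂ →ₗ[ℂ] Matrix (Fin m) (Fin m) ℂ) :
    Matrix (Fin m × Fin d) (Fin m × Fin d) ℂ :=
  ∑ i : Fin d, ∑ j : Fin d,
    (S (Matrix.single i j 1)) ⊗ₖ (Matrix.single i j 1)

/-- The ME-norm `‖S‖_ME = ‖J(S)‖₁ / d`. -/
noncomputable def MENorm {d m : ℕ}
    (S : Matrix (Fin d) (Fin d) ℂ →ₗ[ℂ] Matrix (Fin m) (Fin m) ℂ) : ℝ :=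
  traceNorm (choi S) / d

/-- The diamond norm: supremum over density matrices σ of
`‖(1 ⊗ √σ) J(S) (1 ⊗ √σ)‖₁`. -/
noncomputable def diamondNorm {d m : ℕ}
    (S : Matrix (Fin d) (Fin d) ℂ →ₗ[ℂ] Matrix (Fin m) (Fin m) ℂ) : ℝ :=
  ⨆ σ : {σ : Matrix (Fin d) (Fin d) ℂ // IsDensity σ},
    traceNorm (((1 : Matrix (Fin m) (Fin m) ℂ) ⊗ₖ matSqrt σ.1) * choi S *
      ((1 : Matrix (Fin m) (Fin m) ℂ) ⊗ₖ matSqrt σ.1))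

/-- The M-operator `M(S) = Tr_B |J(S)|`. -/
noncomputable def Mop {d m : ℕ}
    (S : Matrix (Fin d) (Fin d) ℂ →ₗ[ℂ] Matrix (Fin m) (Fin m) ℂ) :
    Matrix (Fin d) (Fin d) ℂ :=
  Matrix.of fun k l => ∑ b : Fin m, matAbs (choi S) (b, k) (b, l)

/-- A quantum channel: completely positive (PSD Choi operator, by Choi's theorem)
and trace preserving. -/
def IsQChannel {d m : ℕ}
    (S : Matrix (Fin d) (Fin d) ℂ →ₗ[ℂ] Matrix (Fin m) (Fin m) ℂ) : Prop :=
  (choi S).PosSemidef ∧ ∀ ρ : Matrix (Fin d) (Fin d) ℂ, (S ρ).trace = ρ.trace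

/-- A POVM with `n` outcomes on `ℂ^d`. -/
def IsPOVM {d n : ℕ} (M : Fin n → Matrix (Fin d) (Fin d) ℂ) : Prop :=
  (∀ i, (M i).PosSemidef) ∧ ∑ i, M i = 1

/-- The measurement channel of a family of POVM elements:
`Φ_M(ρ) = ∑ i, Tr(ρ M_i) |i⟩⟨i|`. -/
noncomputable def measChannel {d n : ℕ} (M : Fin n → Matrix (Fin d) (Fin d) ℂ) :
    Matrix (Fin d) (Fin d) ℂ →ₗ[ℂ] Matrix (Fin n) (Fin n) ℂ where
  toFun ρ := ∑ i, (ρ * M i).trace • Matrix.single i i (1 : ℂ)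
  map_add' ρ σ := by
    simp [add_mul, Matrix.trace_add, add_smul, Finset.sum_add_distrib]
  map_smul' c ρ := by
    simp [Matrix.smul_mul, Matrix.trace_smul, smul_smul, Finset.smul_sum]

/-- The symmetric Werner-Holevo channel `Φ₊(ρ) = (Tr(ρ)·1 + ρᵀ)/(d+1)`. -/
noncomputable def whPlus (d : ℕ) :
    Matrix (Fin d) (Fin d) ℂ →ₗ[ℂ] Matrix (Fin d) (Fin d) ℂ where
  toFun ρ := ((d : ℂ) + 1)⁻¹ • (ρ.trace • (1 : Matrix (Fin d) (Fin d) ℂ) + ρ.transpose)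
  map_add' ρ σ := by
    simp [Matrix.trace_add, Matrix.transpose_add, add_smul, smul_add]
    module
  map_smul' c ρ := by
    simp [Matrix.trace_smul, Matrix.transpose_smul, smul_smul, smul_add]
    module

/-- The antisymmetric Werner-Holevo channel `Φ₋(ρ) = (Tr(ρ)·1 − ρᵀ)/(d−1)`. -/
noncomputable def whMinus (d : ℕ) :
    Matrix (Fin d) (Fin d) ℂ →ₗ[ℂ] Matrix (Fin d) (Fin d) ℂ where
  toFun ρ := ((d : ℂ) - 1)⁻¹ • (ρ.trace • (1 : Matrix (Fin d) (Fin d) ℂ) - ρ.transpose)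
  map_add' ρ σ := by
    simp [Matrix.trace_add, Matrix.transpose_add, add_smul]
    module
  map_smul' c ρ := by
    simp [Matrix.trace_smul, Matrix.transpose_smul, smul_smul]
    module

/-- The unitary (conjugation) channel `Φ_U(ρ) = U ρ Uᴴ`. -/
noncomputable def conjChannel {d : ℕ} (U : Matrix (Fin d) (Fin d) ℂ) :
    Matrix (Fin d) (Fin d) ℂ →ₗ[ℂ] Matrix (Fin d) (Fin d) ℂ where
  toFun ρ := U * ρ * Uᴴ
  map_add' ρ σ := by simp [Matrix.mul_add, Matrix.add_mul]
  map_smul' c ρ := by simp [Matrix.mul_smul, Matrix.smul_mul]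


/-- The POVM element `M₀ = [[1/10, 0], [0, 1/5]]`. -/
noncomputable def M16 : Matrix (Fin 2) (Fin 2) ℂ := !![1/10, 0; 0, 1/5]

/-- The POVM element `N₀ = [[3/10, 1/√10], [1/√10, 7/10]]`. -/
noncomputable def N16 : Matrix (Fin 2) (Fin 2) ℂ :=
  !![3/10, (((Real.sqrt 10)⁻¹ : ℝ) : ℂ); (((Real.sqrt 10)⁻¹ : ℝ) : ℂ), 7/10]

lemma Matrix.PosSemidef.sqrtE_eq {n : Type*} [Fintype n] [DecidableEq n] {A : Matrix n n ℂ}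
    (h : A.PosSemidef) :
    h.1.eigenvectorUnitary.1 * Matrix.diagonal ((↑) ∘ Real.sqrt ∘ h.1.eigenvalues) *
      (star h.1.eigenvectorUnitary : Matrix n n ℂ) = cfc Real.sqrt A := by
  rw [h.1.cfc_eq]; rfl

noncomputable def Matrix.PosSemidef.sqrt {n : Type*} [Fintype n] [DecidableEq n]
    {A : Matrix n n ℂ} (h : A.PosSemidef) : Matrix n n ℂ :=
  h.1.eigenvectorUnitary.1 * Matrix.diagonal ((↑) ∘ Real.sqrt ∘ h.1.eigenvalues) *
    (star h.1.eigenvectorUnitary : Matrix n n ℂ)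

lemma Matrix.PosSemidef.spec_nonneg {n : Type*} [Fintype n] [DecidableEq n] {A : Matrix n n ℂ}
    (h : A.PosSemidef) : ∀ x ∈ spectrum ℝ A, 0 ≤ x := by
  intro x hx
  rw [h.1.spectrum_real_eq_range_eigenvalues] at hx
  obtain ⟨i, rfl⟩ := hx
  exact h.eigenvalues_nonneg i

lemma Matrix.PosSemidef.posSemidef_sqrt {n : Type*} [Fintype n] [DecidableEq n]
    {A : Matrix n n ℂ} (h : A.PosSemidef) : h.sqrt.PosSemidef := by
  have hD : (Matrix.diagonal (((↑) ∘ Real.sqrt ∘ h.1.eigenvalues : n → ℂ))).PosSemidef := by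
    apply Matrix.PosSemidef.diagonal
    intro i
    simp only [Pi.zero_apply, Function.comp_apply]
    exact_mod_cast Real.sqrt_nonneg _
  have := hD.mul_mul_conjTranspose_same (h.1.eigenvectorUnitary.1)
  rwa [← Matrix.star_eq_conjTranspose] at this

lemma Matrix.PosSemidef.sqrt_mul_self {n : Type*} [Fintype n] [DecidableEq n]
    {A : Matrix n n ℂ} (h : A.PosSemidef) : h.sqrt * h.sqrt = A := by
  rw [Matrix.PosSemidef.sqrt, h.sqrtE_eq, ← cfc_mul Real.sqrt Real.sqrt A]
  conv_rhs => rw [← cfc_id' ℝ A h.1.isSelfAdjoint]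
  apply cfc_congr
  intro x hx
  exact Real.mul_self_sqrt (h.spec_nonneg x hx)

lemma Matrix.PosSemidef.eq_sqrt_of_sq_eq {n : Type*} [Fintype n] [DecidableEq n]
    {A : Matrix n n ℂ} (hA : A.PosSemidef) (B : Matrix n n ℂ) (hAB : A ^ 2 = B)
    (hB : B.PosSemidef := by exact Matrix.posSemidef_conjTranspose_mul_self _) : A = hB.sqrt := by
  rw [Matrix.PosSemidef.sqrt, hB.sqrtE_eq, ← hAB, ← cfc_pow_id (R := ℝ) A 2 hA.1.isSelfAdjoint,
    ← cfc_comp Real.sqrt (fun x => x ^ 2) A hA.1.isSelfAdjoint]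
  conv_lhs => rw [← cfc_id' ℝ A hA.1.isSelfAdjoint]
  apply cfc_congr
  intro x hx
  simp [Real.sqrt_sq (hA.spec_nonneg x hx)]


namespace Stmt16Aux

/-! ### Auxiliary lemmas for `stmt16`. -/

lemma conjT_kron {l m n p : Type*} (A : Matrix l m ℂ) (B : Matrix n p ℂ) :
    (A ⊗ₖ B)ᴴ = Aᴴ ⊗ₖ Bᴴ := by
  ext ⟨i,j⟩ ⟨k,ll⟩
  simp [Matrix.conjTranspose_apply, Matrix.kroneckerMap_apply, star_mul', mul_comm]

lemma psd_trace_re_nonneg {n : Type*} [Fintype n] [DecidableEq n] {A : Matrix n n ℂ}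
    (hA : A.PosSemidef) : 0 ≤ A.trace.re := by
  rw [Matrix.trace, Complex.re_sum]
  apply Finset.sum_nonneg
  intro i _
  have h := hA.re_dotProduct_nonneg (Pi.single i 1)
  simpa [dotProduct, Matrix.mulVec, Pi.single_apply, Matrix.diag] using h

lemma trace_mul_psd_re_nonneg {n : Type*} [Fintype n] [DecidableEq n]
    {A B : Matrix n n ℂ} (hA : A.PosSemidef) (hB : B.PosSemidef) :
    0 ≤ ((A * B).trace).re := by
  have h1 : (A * B).trace = (hB.sqrt * A * hB.sqrt).trace := by
    rw [Matrix.trace_mul_cycle (hB.sqrt) A (hB.sqrt), hB.sqrt_mul_self, Matrix.trace_mul_comm]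
  have h2 : (hB.sqrt * A * hB.sqrt).PosSemidef := by
    have := hA.conjTranspose_mul_mul_same hB.sqrt
    rwa [hB.posSemidef_sqrt.1.eq] at this
  rw [h1]
  exact psd_trace_re_nonneg h2

lemma matAbs_kron (H : Matrix (Fin 2) (Fin 2) ℂ) (hH : (-H).PosSemidef) :
    matAbs ((!![1,0;0,(-1:ℂ)]) ⊗ₖ H) = (1 : Matrix (Fin 2) (Fin 2) ℂ) ⊗ₖ (-H) := by
  have hHerm : Hᴴ = H := by
    have := hH.isHermitian.eq
    have h2 := congrArg Neg.neg this
    simpa using h2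
  set A : Matrix (Fin 2) (Fin 2) ℂ := !![1,0;0,-1] with hA
  have hAH : Aᴴ = A := by
    ext i j; fin_cases i <;> fin_cases j <;> simp [hA]
  have hAA : A * A = 1 := by
    ext i j; fin_cases i <;> fin_cases j <;>
      simp [hA, Matrix.mul_apply, Fin.sum_univ_two, Matrix.one_apply]
  have hQ : ((1 : Matrix (Fin 2) (Fin 2) ℂ) ⊗ₖ (-H)).PosSemidef := by
    have hfac : (1 : Matrix (Fin 2) (Fin 2) ℂ) ⊗ₖ (-H)
        = ((1 : Matrix (Fin 2) (Fin 2) ℂ) ⊗ₖ hH.sqrt)ᴴ *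
          ((1 : Matrix (Fin 2) (Fin 2) ℂ) ⊗ₖ hH.sqrt) := by
      rw [conjT_kron, Matrix.conjTranspose_one, hH.posSemidef_sqrt.1.eq,
        ← Matrix.mul_kronecker_mul, one_mul, hH.sqrt_mul_self]
    rw [hfac]
    exact Matrix.posSemidef_conjTranspose_mul_self _
  have hsq : ((1 : Matrix (Fin 2) (Fin 2) ℂ) ⊗ₖ (-H)) ^ 2 = (A ⊗ₖ H)ᴴ * (A ⊗ₖ H) := by
    rw [pow_two, ← Matrix.mul_kronecker_mul, one_mul, conjT_kron, hAH, hHerm,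
      ← Matrix.mul_kronecker_mul, hAA, neg_mul_neg]
  exact (hQ.eq_sqrt_of_sq_eq _ hsq).symm

lemma traceNorm_kron (H : Matrix (Fin 2) (Fin 2) ℂ) (hH : (-H).PosSemidef) :
    traceNorm ((!![1,0;0,(-1:ℂ)]) ⊗ₖ H) = 2 * ((-H).trace).re := by
  rw [traceNorm, matAbs_kron H hH, Matrix.trace_kronecker, Matrix.trace_one]
  norm_num [Complex.mul_re]

/-- `D = M₀ − N₀` (as it appears after the choi computation). -/
noncomputable def Dm : Matrix (Fin 2) (Fin 2) ℂ :=
  !![-(1/5), -(((Real.sqrt 10)⁻¹ : ℝ) : ℂ); -(((Real.sqrt 10)⁻¹ : ℝ) : ℂ), -(1/2)]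

lemma choi_apply' {d m : ℕ}
    (S : Matrix (Fin d) (Fin d) ℂ →ₗ[ℂ] Matrix (Fin m) (Fin m) ℂ)
    (b c : Fin m) (k l : Fin d) :
    choi S (b, k) (c, l) = (S (Matrix.single k l 1)) b c := by
  rw [choi]
  simp [Matrix.sum_apply, Matrix.kroneckerMap_apply, Matrix.single,
    Matrix.of_apply, ite_and, mul_ite, Finset.sum_ite_eq]

lemma choi_eq :
    choi (measChannel ![M16, 1 - M16] - measChannel ![N16, 1 - N16])
      = (!![1,0;0,(-1:ℂ)]) ⊗ₖ Dm := by
  ext ⟨b,k⟩ ⟨c,l⟩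
  rw [choi_apply']
  fin_cases b <;> fin_cases k <;> fin_cases c <;> fin_cases l <;>
    simp [measChannel, M16, N16, Dm, Matrix.kroneckerMap_apply, Matrix.trace,
      Matrix.mul_apply, Fin.sum_univ_two, Matrix.single, Matrix.one_apply,
      Matrix.sum_apply, Matrix.of_apply, LinearMap.sub_apply, Matrix.sub_apply] <;>
    ring

lemma s10 : Real.sqrt 10 * Real.sqrt 10 = 10 := Real.mul_self_sqrt (by norm_num)

lemma i5i2 : (Real.sqrt 5)⁻¹ * (Real.sqrt 2)⁻¹ = (Real.sqrt 10)⁻¹ := by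
  rw [← mul_inv, ← Real.sqrt_mul (by norm_num : (0:ℝ) ≤ 5)]
  norm_num

lemma i5i5 : (Real.sqrt 5)⁻¹ * (Real.sqrt 5)⁻¹ = 1/5 := by
  rw [← mul_inv, Real.mul_self_sqrt (by norm_num)]; norm_num

lemma i2i2 : (Real.sqrt 2)⁻¹ * (Real.sqrt 2)⁻¹ = 1/2 := by
  rw [← mul_inv, Real.mul_self_sqrt (by norm_num)]; norm_num

lemma ci5i5 : ((Real.sqrt 5 : ℝ):ℂ)⁻¹ * ((Real.sqrt 5 : ℝ):ℂ)⁻¹ = 1/5 := by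
  rw [← Complex.ofReal_inv, ← Complex.ofReal_mul, i5i5]; norm_num
lemma ci2i2 : ((Real.sqrt 2 : ℝ):ℂ)⁻¹ * ((Real.sqrt 2 : ℝ):ℂ)⁻¹ = 1/2 := by
  rw [← Complex.ofReal_inv, ← Complex.ofReal_mul, i2i2]; norm_num
lemma ci5i2 : ((Real.sqrt 5 : ℝ):ℂ)⁻¹ * ((Real.sqrt 2 : ℝ):ℂ)⁻¹ = ((Real.sqrt 10 : ℝ):ℂ)⁻¹ := by
  rw [← Complex.ofReal_inv, ← Complex.ofReal_inv, ← Complex.ofReal_mul, i5i2, Complex.ofReal_inv]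
lemma ci2i5 : ((Real.sqrt 2 : ℝ):ℂ)⁻¹ * ((Real.sqrt 5 : ℝ):ℂ)⁻¹ = ((Real.sqrt 10 : ℝ):ℂ)⁻¹ := by
  rw [mul_comm]; exact ci5i2

lemma negDm_psd : (-Dm).PosSemidef := by
  have h : -Dm = (!![(((Real.sqrt 5)⁻¹:ℝ):ℂ); (((Real.sqrt 2)⁻¹:ℝ):ℂ)] : Matrix (Fin 2) (Fin 1) ℂ)
      * (!![(((Real.sqrt 5)⁻¹:ℝ):ℂ); (((Real.sqrt 2)⁻¹:ℝ):ℂ)] : Matrix (Fin 2) (Fin 1) ℂ)ᴴ := by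
    ext i j
    fin_cases i <;> fin_cases j <;>
      simp [Dm, Matrix.mul_apply, Matrix.conjTranspose_apply, Fin.sum_univ_one,
        ci5i5, ci5i2, ci2i5, ci2i2]
  rw [h]
  simpa using Matrix.posSemidef_conjTranspose_mul_self
    (!![(((Real.sqrt 5)⁻¹:ℝ):ℂ); (((Real.sqrt 2)⁻¹:ℝ):ℂ)] : Matrix (Fin 2) (Fin 1) ℂ)ᴴ

noncomputable def Em : Matrix (Fin 2) (Fin 2) ℂ :=
  !![1/2, -(((Real.sqrt 10)⁻¹ : ℝ) : ℂ); -(((Real.sqrt 10)⁻¹ : ℝ) : ℂ), 1/5]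

lemma Em_psd : Em.PosSemidef := by
  have h : Em = (!![(((Real.sqrt 2)⁻¹:ℝ):ℂ); (-((Real.sqrt 5)⁻¹:ℝ):ℂ)] : Matrix (Fin 2) (Fin 1) ℂ)
      * (!![(((Real.sqrt 2)⁻¹:ℝ):ℂ); (-((Real.sqrt 5)⁻¹:ℝ):ℂ)] : Matrix (Fin 2) (Fin 1) ℂ)ᴴ := by
    ext i j
    fin_cases i <;> fin_cases j <;>
      simp [Em, Matrix.mul_apply, Matrix.conjTranspose_apply, Fin.sum_univ_one,
        ci5i5, ci5i2, ci2i5, ci2i2]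
  rw [h]
  simpa using Matrix.posSemidef_conjTranspose_mul_self
    (!![(((Real.sqrt 2)⁻¹:ℝ):ℂ); (-((Real.sqrt 5)⁻¹:ℝ):ℂ)] : Matrix (Fin 2) (Fin 1) ℂ)ᴴ

lemma negDm_eq : -Dm = ((7/10 : ℂ)) • (1 : Matrix (Fin 2) (Fin 2) ℂ) - Em := by
  ext i j
  fin_cases i <;> fin_cases j <;>
    simp [Dm, Em, Matrix.one_apply] <;> norm_num

lemma negDm_trace : ((-Dm).trace).re = 7/10 := by
  simp [Dm, Matrix.trace_fin_two]
  norm_num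

lemma bound {σ : Matrix (Fin 2) (Fin 2) ℂ} (hσ : IsDensity σ) :
    ((σ * (-Dm)).trace).re ≤ 7/10 := by
  rw [negDm_eq, Matrix.mul_sub, Matrix.trace_sub, Matrix.mul_smul, Matrix.mul_one,
    Matrix.trace_smul, hσ.2]
  have h := trace_mul_psd_re_nonneg hσ.1 Em_psd
  simp only [smul_eq_mul, mul_one, Complex.sub_re]
  norm_num
  linarith

lemma matSqrt_eq {n : Type*} [Fintype n] [DecidableEq n] {σ : Matrix n n ℂ}
    (hσ : σ.PosSemidef) : matSqrt σ = hσ.sqrt := by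
  rw [matSqrt, dif_pos hσ, Matrix.PosSemidef.sqrt]

lemma F_eq {σ : Matrix (Fin 2) (Fin 2) ℂ} (hσ : IsDensity σ) :
    traceNorm (((1 : Matrix (Fin 2) (Fin 2) ℂ) ⊗ₖ matSqrt σ) *
        choi (measChannel ![M16, 1 - M16] - measChannel ![N16, 1 - N16]) *
        ((1 : Matrix (Fin 2) (Fin 2) ℂ) ⊗ₖ matSqrt σ))
      = 2 * ((σ * (-Dm)).trace).re := by
  set s := matSqrt σ with hs
  have hsdef : s = hσ.1.sqrt := matSqrt_eq hσ.1
  have hsH : sᴴ = s := by rw [hsdef]; exact hσ.1.posSemidef_sqrt.1.eq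
  have hss : s * s = σ := by rw [hsdef]; exact hσ.1.sqrt_mul_self
  have hneg : -(s * Dm * s) = sᴴ * (-Dm) * s := by
    rw [hsH, Matrix.mul_neg, Matrix.neg_mul]
  have hH : (-(s * Dm * s)).PosSemidef := by
    rw [hneg]; exact negDm_psd.conjTranspose_mul_mul_same s
  have hXe : ((1 : Matrix (Fin 2) (Fin 2) ℂ) ⊗ₖ s) *
      ((!![1,0;0,(-1:ℂ)]) ⊗ₖ Dm) * ((1 : Matrix (Fin 2) (Fin 2) ℂ) ⊗ₖ s)
      = (!![1,0;0,(-1:ℂ)]) ⊗ₖ (s * Dm * s) := by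
    rw [← Matrix.mul_kronecker_mul, ← Matrix.mul_kronecker_mul, one_mul, mul_one]
  rw [choi_eq, hXe, traceNorm_kron _ hH]
  congr 1
  rw [hneg, hsH, Matrix.trace_mul_cycle, hss]

lemma pc : Real.sqrt (2/7) * Real.sqrt (5/7) * (Real.sqrt 10)⁻¹ = 1/7 := by
  rw [← Real.sqrt_mul (by norm_num), ← Real.sqrt_inv, ← Real.sqrt_mul (by positivity)]
  rw [show (2/7 : ℝ) * (5/7) * 10⁻¹ = (1/7)^2 by norm_num, Real.sqrt_sq (by norm_num)]

lemma r27 : Real.sqrt (2/7) * Real.sqrt (2/7) = 2/7 := Real.mul_self_sqrt (by norm_num)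
lemma r57 : Real.sqrt (5/7) * Real.sqrt (5/7) = 5/7 := Real.mul_self_sqrt (by norm_num)

lemma hr1 : Real.sqrt (2/7) * Real.sqrt (2/7) + Real.sqrt (5/7) * Real.sqrt (5/7) = 1 := by
  rw [r27, r57]; norm_num

noncomputable def wv : Matrix (Fin 2) (Fin 1) ℂ :=
  !![((Real.sqrt (2/7) : ℝ):ℂ); ((Real.sqrt (5/7) : ℝ):ℂ)]

noncomputable def sigStar : Matrix (Fin 2) (Fin 2) ℂ := wv * wvᴴ

lemma sigStar_psd : sigStar.PosSemidef := by
  simpa [sigStar] using Matrix.posSemidef_conjTranspose_mul_self wvᴴ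

lemma sigStar_trace : sigStar.trace = 1 := by
  simp only [sigStar, Matrix.trace_fin_two, Matrix.mul_apply, Matrix.conjTranspose_apply,
    Fin.sum_univ_one, wv, Matrix.of_apply, Matrix.cons_val', Matrix.cons_val_zero,
    Matrix.cons_val_one, Matrix.head_cons, Matrix.empty_val', Matrix.cons_val_fin_one,
    Complex.star_def, Complex.conj_ofReal, Matrix.head_fin_const]
  push_cast [← Complex.ofReal_mul]
  exact_mod_cast hr1

lemma sigStar_dens : IsDensity sigStar := ⟨sigStar_psd, sigStar_trace⟩

lemma wv_inner : wvᴴ * wv = 1 := by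
  ext i j
  fin_cases i; fin_cases j
  simp only [Matrix.mul_apply, Matrix.conjTranspose_apply, Fin.sum_univ_two, wv,
    Matrix.of_apply, Matrix.cons_val', Matrix.cons_val_zero, Matrix.cons_val_one,
    Matrix.head_cons, Matrix.empty_val', Matrix.cons_val_fin_one, Complex.star_def,
    Complex.conj_ofReal, Matrix.one_apply_eq, Matrix.head_fin_const]
  exact_mod_cast hr1

lemma sigStar_proj : sigStar ^ 2 = sigStar := by
  rw [pow_two, sigStar, Matrix.mul_assoc, ← Matrix.mul_assoc wvᴴ wv wvᴴ, wv_inner,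
    Matrix.one_mul]

lemma sigStar_val : ((sigStar * (-Dm)).trace).re = 7/10 := by
  have key : (sigStar * (-Dm)).trace = ((7/10 : ℝ) : ℂ) := by
    simp only [sigStar, Dm, Matrix.trace_fin_two, Matrix.mul_apply, Fin.sum_univ_two,
      Fin.sum_univ_one, Matrix.conjTranspose_apply, wv, Matrix.of_apply, Matrix.cons_val',
      Matrix.cons_val_zero, Matrix.cons_val_one, Matrix.head_cons, Matrix.empty_val',
      Matrix.cons_val_fin_one, Complex.star_def, Complex.conj_ofReal, Matrix.neg_apply,
      Matrix.head_fin_const, neg_neg]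
    push_cast [← Complex.ofReal_mul, ← Complex.ofReal_inv]
    simp only [show (1/5 : ℂ) = ((1/5:ℝ):ℂ) by norm_num,
      show (1/2 : ℂ) = ((1/2:ℝ):ℂ) by norm_num, show (7/10 : ℂ) = ((7/10:ℝ):ℂ) by norm_num,
      ← Complex.ofReal_mul, ← Complex.ofReal_add]
    rw [Complex.ofReal_inj]
    linear_combination (1/5) * r27 + (1/2) * r57 + 2 * pc
  rw [key, Complex.ofReal_re]

end Stmt16Aux

open Stmt16Aux in
/-- the explicit non-commuting dichotomic POVMs `{M₀, 1−M₀}`,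
`{N₀, 1−N₀}` above satisfy `M₀N₀ ≠ N₀M₀`, `det(M₀−N₀) = 0`, and their
measurement channels form a MEWC pair. -/
theorem stmt16 :
    M16 * N16 ≠ N16 * M16
    ∧ (M16 - N16).det = 0
    ∧ diamondNorm (measChannel ![M16, 1 - M16] - measChannel ![N16, 1 - N16])
        = 2 * MENorm (measChannel ![M16, 1 - M16] - measChannel ![N16, 1 - N16]) := by
  refine ⟨?_, ?_, ?_⟩
  · intro h
    have h01 := congrFun (congrFun h 0) 1
    simp [M16, N16, Matrix.mul_apply, Fin.sum_univ_two] at h01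
    have hne : ((Real.sqrt 10 : ℝ) : ℂ) ≠ 0 := by
      simp only [ne_eq, Complex.ofReal_eq_zero]
      positivity
    rw [mul_comm] at h01
    have h2 := mul_left_cancel₀ (inv_ne_zero hne) h01
    norm_num at h2
  · have h10 : ((Real.sqrt 10 : ℝ) : ℂ)⁻¹ * ((Real.sqrt 10 : ℝ) : ℂ)⁻¹ = 1/10 := by
      rw [← mul_inv, ← Complex.ofReal_mul, s10]; norm_num
    simp [M16, N16, Matrix.det_fin_two, Matrix.sub_apply, h10]
    norm_num
  · have hME : MENorm (measChannel ![M16, 1 - M16] - measChannel ![N16, 1 - N16]) = 7/10 := by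
      rw [MENorm, choi_eq, traceNorm_kron _ negDm_psd, negDm_trace]
      norm_num
    have hDia : diamondNorm (measChannel ![M16, 1 - M16] - measChannel ![N16, 1 - N16])
        = 7/5 := by
      rw [diamondNorm]
      have hub : ∀ τ : {σ : Matrix (Fin 2) (Fin 2) ℂ // IsDensity σ},
          traceNorm (((1 : Matrix (Fin 2) (Fin 2) ℂ) ⊗ₖ matSqrt τ.1) *
            choi (measChannel ![M16, 1 - M16] - measChannel ![N16, 1 - N16]) *
            ((1 : Matrix (Fin 2) (Fin 2) ℂ) ⊗ₖ matSqrt τ.1)) ≤ 7/5 := by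
        intro τ
        rw [F_eq τ.2]
        have := bound τ.2
        linarith
      have hne : Nonempty {σ : Matrix (Fin 2) (Fin 2) ℂ // IsDensity σ} :=
        ⟨⟨sigStar, sigStar_dens⟩⟩
      apply le_antisymm
      · exact ciSup_le hub
      · have hbdd : BddAbove (Set.range fun τ : {σ : Matrix (Fin 2) (Fin 2) ℂ // IsDensity σ} =>
            traceNorm (((1 : Matrix (Fin 2) (Fin 2) ℂ) ⊗ₖ matSqrt τ.1) *
              choi (measChannel ![M16, 1 - M16] - measChannel ![N16, 1 - N16]) *
              ((1 : Matrix (Fin 2) (Fin 2) ℂ) ⊗ₖ matSqrt τ.1))) := by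
          refine ⟨7/5, ?_⟩
          rintro x ⟨τ, rfl⟩
          exact hub τ
        have h0 := le_ciSup hbdd (⟨sigStar, sigStar_dens⟩ :
          {σ : Matrix (Fin 2) (Fin 2) ℂ // IsDensity σ})
        rw [F_eq sigStar_dens, sigStar_val] at h0
        linarith
    rw [hDia, hME]
    norm_num

end
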